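/- arXiv:0904.3371 — 2 statements merged into one kernel-verified Lean document; each statement's English description precedes it below -/
import Mathlib

section
/- Let P ≤ W be a finite subgroup. The ℚ-linear map ι : ℚ[P\W/P] → ℚ[W] into the group algebra of W, defined by ι(f) := Σ_{w∈W} (f(w)/#P)·w, is an injective homomorphism of ℚ-algebras from (ℚ[P\W/P], *_P, 1_P) to ℚ[W]; in particular ι(1_P) = (1/#P)·Σ_{g∈P} g and ι(f₁ *_P f₂) = ι(f₁)·ι(f₂) for all f₁, f₂ ∈ ℚ[P\W/P]. -/
/-- `f ∈ ℚ[H\W/K]`: `f : W → ℚ` is finitely supported, left `H`-invariant and right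
`K`-invariant. -/
def IsBiInvariant {W : Type*} [Group W] (H K : Subgroup W) (f : W → ℚ) : Prop :=
  (Function.support f).Finite ∧ ∀ h ∈ H, ∀ k ∈ K, ∀ w : W, f (h * w * k) = f w

/-- The convolution `(f₁ *_Q f₂)(w) = ∑_{v∈T} f₁(v)·f₂(v⁻¹·w)`, computed with the set of
representatives `T = {Quotient.out c : c ∈ W/Q}` of the left cosets `W/Q`. -/
noncomputable def dcConv {W : Type*} [Group W] (Q : Subgroup W) (f₁ f₂ : W → ℚ) : W → ℚ :=
  fun w => ∑ᶠ c : W ⧸ Q, f₁ (Quotient.out c) * f₂ ((Quotient.out c)⁻¹ * w)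

/-- `1_P`, the indicator function of the subgroup `P ⊆ W`. -/
noncomputable def subIndicator {W : Type*} [Group W] (P : Subgroup W) : W → ℚ :=
  Set.indicator (P : Set W) 1

/-- The map `ι : ℚ[P\W/P] → ℚ[W]`, `ι(f) = ∑_{w∈W} (f(w)/#P)·w`, into the group algebra. -/
noncomputable def iotaDC {W : Type*} [Group W] (P : Subgroup W) (f : W → ℚ) :
    MonoidAlgebra ℚ W :=
  ∑ᶠ w : W, MonoidAlgebra.single w (f w / (Nat.card P : ℚ))

section helpers
variable {W : Type*} [Group W] {P : Subgroup W} {f : W → ℚ}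

lemma iotaDC_eq_sum (P : Subgroup W) (hf : (Function.support f).Finite) :
    iotaDC P f = ∑ w ∈ hf.toFinset, MonoidAlgebra.single w (f w / (Nat.card P : ℚ)) := by
  apply finsum_eq_finset_sum_of_support_subset
  intro w hw
  simp only [Function.mem_support] at hw
  simp only [Set.Finite.coe_toFinset, Function.mem_support]
  intro h0
  apply hw
  rw [h0]; simp

lemma iotaDC_apply (P : Subgroup W) (hf : (Function.support f).Finite) (x : W) :
    (iotaDC P f).coeff x = f x / (Nat.card P : ℚ) := by
  rw [iotaDC_eq_sum P hf]
  rw [MonoidAlgebra.coeff_sum, Finsupp.finset_sum_apply]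
  rw [Finset.sum_eq_single x]
  · simp [MonoidAlgebra.coeff_single]
  · intro b _ hb
    simp [MonoidAlgebra.coeff_single, Finsupp.single_apply, hb]
  · intro hx
    simp only [Set.Finite.mem_toFinset, Function.mem_support, not_not] at hx
    simp [MonoidAlgebra.coeff_single, hx]

lemma right_inv_of_bi (hf : IsBiInvariant P P f) {p : W} (hp : p ∈ P) (w : W) :
    f (w * p) = f w := by
  have := hf.2 1 P.one_mem p hp w
  simpa using this

lemma left_inv_of_bi (hf : IsBiInvariant P P f) {p : W} (hp : p ∈ P) (w : W) :
    f (p * w) = f w := by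
  have := hf.2 p hp 1 P.one_mem w
  simpa using this

lemma coset_sum [Finite P] {f₁ f₂ : W → ℚ} (h₁ : IsBiInvariant P P f₁)
    (h₂ : IsBiInvariant P P f₂) (x : W) (t : Finset (W ⧸ P))
    (ht : ∀ a : W, f₁ a ≠ 0 → QuotientGroup.mk (s := P) a ∈ t) :
    ∑ a ∈ h₁.1.toFinset, f₁ a * f₂ (a⁻¹ * x)
      = (Nat.card P : ℚ) *
        ∑ c ∈ t, f₁ (Quotient.out c) * f₂ ((Quotient.out c)⁻¹ * x) := by
  classical
  haveI := Fintype.ofFinite P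
  rw [← Finset.sum_fiberwise_of_maps_to (g := QuotientGroup.mk (s := P))
    (fun a ha => ht a (h₁.1.mem_toFinset.1 ha)), Finset.mul_sum]
  refine Finset.sum_congr rfl fun c _hc => ?_
  have houtc : QuotientGroup.mk (s := P) (Quotient.out c) = c := QuotientGroup.out_eq' c
  have hval : ∀ a : W, QuotientGroup.mk (s := P) a = c →
      f₁ a = f₁ (Quotient.out c) ∧ f₂ (a⁻¹ * x) = f₂ ((Quotient.out c)⁻¹ * x) := by
    intro a ha
    have hmem : (Quotient.out c)⁻¹ * a ∈ P := by
      rw [← QuotientGroup.eq (s := P), houtc, ha]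
    constructor
    · conv_lhs => rw [show a = Quotient.out c * ((Quotient.out c)⁻¹ * a) by group]
      exact right_inv_of_bi h₁ hmem _
    · have : a⁻¹ * x = ((Quotient.out c)⁻¹ * a)⁻¹ * ((Quotient.out c)⁻¹ * x) := by group
      rw [this, left_inv_of_bi h₂ (P.inv_mem hmem)]
  by_cases hfout : f₁ (Quotient.out c) = 0
  · have : h₁.1.toFinset.filter (fun a => QuotientGroup.mk (s := P) a = c) = ∅ := by
      rw [Finset.filter_eq_empty_iff]
      intro a ha hmk
      exact absurd ((hval a hmk).1.trans hfout) (h₁.1.mem_toFinset.1 ha)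
    rw [this, hfout, Finset.sum_empty, zero_mul, mul_zero]
  · have hfilter : h₁.1.toFinset.filter (fun a => QuotientGroup.mk (s := P) a = c)
        = Finset.image (fun p : P => Quotient.out c * (p : W)) Finset.univ := by
      ext a
      simp only [Finset.mem_filter, Set.Finite.mem_toFinset, Function.mem_support,
        Finset.mem_image, Finset.mem_univ, true_and]
      constructor
      · rintro ⟨_, ha⟩
        have hmem : (Quotient.out c)⁻¹ * a ∈ P := by
          rw [← QuotientGroup.eq (s := P), houtc, ha]
        exact ⟨⟨_, hmem⟩, by group⟩
      · rintro ⟨p, rfl⟩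
        have hm : QuotientGroup.mk (s := P) (Quotient.out c * (p : W)) = c := by
          rw [← houtc]
          exact QuotientGroup.eq.2 (by simpa using P.inv_mem p.2)
        refine ⟨?_, hm⟩
        rw [(hval _ hm).1]; exact hfout
    calc ∑ a ∈ h₁.1.toFinset.filter (fun a => QuotientGroup.mk (s := P) a = c),
          f₁ a * f₂ (a⁻¹ * x)
        = ∑ _a ∈ h₁.1.toFinset.filter (fun a => QuotientGroup.mk (s := P) a = c),
          f₁ (Quotient.out c) * f₂ ((Quotient.out c)⁻¹ * x) := by
          refine Finset.sum_congr rfl fun a ha => ?_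
          obtain ⟨hh1, hh2⟩ := hval a (Finset.mem_filter.1 ha).2
          rw [hh1, hh2]
      _ = (Nat.card P : ℚ) * (f₁ (Quotient.out c) * f₂ ((Quotient.out c)⁻¹ * x)) := by
          rw [Finset.sum_const, hfilter, Finset.card_image_of_injective _
            (fun p q hpq => Subtype.ext (mul_left_cancel hpq)),
            Finset.card_univ, Nat.card_eq_fintype_card, nsmul_eq_mul]
end helpers

/-- For a finite subgroup `P ≤ W`, the map `ι(f) = ∑_w (f(w)/#P)·w` is an injective
homomorphism of `ℚ`-algebras from `(ℚ[P\W/P], *_P, 1_P)` to the group algebra `ℚ[W]`;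
in particular `ι(1_P) = (1/#P)·∑_{g∈P} g` and `ι(f₁ *_P f₂) = ι(f₁)·ι(f₂)`. -/
theorem iotaDC_algebra_embedding
    {W : Type*} [Group W] (P : Subgroup W) [Finite P] :
    iotaDC P (subIndicator P)
      = (Nat.card P : ℚ)⁻¹ • ∑ᶠ g ∈ (P : Set W), MonoidAlgebra.single g (1 : ℚ) ∧
    (∀ (a : ℚ) (f g : W → ℚ), IsBiInvariant P P f → IsBiInvariant P P g →
      iotaDC P (a • f + g) = a • iotaDC P f + iotaDC P g) ∧
    (∀ f₁ f₂ : W → ℚ, IsBiInvariant P P f₁ → IsBiInvariant P P f₂ →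
      iotaDC P (dcConv P f₁ f₂) = iotaDC P f₁ * iotaDC P f₂) ∧
    (∀ f g : W → ℚ, IsBiInvariant P P f → IsBiInvariant P P g →
      iotaDC P f = iotaDC P g → f = g) := by
  classical
  have hN : (Nat.card P : ℚ) ≠ 0 := by
    exact_mod_cast (Nat.card_pos (α := P)).ne'
  refine ⟨?_, ?_, ?_, ?_⟩
  · -- value on the indicator of P
    have hPfin : (P : Set W).Finite := Set.toFinite _
    have hsupp : (Function.support (subIndicator P)).Finite :=
      hPfin.subset (Set.support_indicator_subset)
    ext x
    rw [iotaDC_apply P hsupp x, finsum_mem_eq_finite_toFinset_sum _ hPfin,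
      MonoidAlgebra.coeff_smul, Finsupp.smul_apply, MonoidAlgebra.coeff_sum, Finsupp.finset_sum_apply]
    simp only [MonoidAlgebra.coeff_single, Finsupp.single_apply, smul_eq_mul]
    rw [Finset.sum_ite_eq' hPfin.toFinset x (fun _ => (1 : ℚ))]
    simp only [Set.Finite.mem_toFinset, subIndicator, Set.indicator_apply, Pi.one_apply]
    split_ifs with h
    · rw [div_eq_mul_inv, one_mul, mul_one]
    · rw [zero_div, mul_zero]
  · -- linearity
    intro a f g hf hg
    have hsupp : (Function.support (a • f + g)).Finite := by
      apply (hf.1.union hg.1).subset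
      intro w hw
      simp only [Function.mem_support, Pi.add_apply, Pi.smul_apply, smul_eq_mul] at hw
      rw [Set.mem_union, Function.mem_support, Function.mem_support]
      by_contra hc
      push_neg at hc
      exact hw (by rw [hc.1, hc.2, mul_zero, add_zero])
    ext x
    rw [MonoidAlgebra.coeff_add, Finsupp.add_apply, MonoidAlgebra.coeff_smul, Finsupp.smul_apply, iotaDC_apply P hsupp,
      iotaDC_apply P hf.1, iotaDC_apply P hg.1]
    simp only [Pi.add_apply, Pi.smul_apply, smul_eq_mul]
    ring
  · -- multiplicativity
    intro f₁ f₂ h₁ h₂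
    set T := h₁.1.toFinset.image (QuotientGroup.mk (s := P)) with hT
    have ht : ∀ a : W, f₁ a ≠ 0 → QuotientGroup.mk (s := P) a ∈ T :=
      fun a ha => Finset.mem_image_of_mem _ (h₁.1.mem_toFinset.2 ha)
    have hdcval : ∀ w, dcConv P f₁ f₂ w
        = ∑ c ∈ T, f₁ (Quotient.out c) * f₂ ((Quotient.out c)⁻¹ * w) := by
      intro w
      apply finsum_eq_finset_sum_of_support_subset
      intro c hc
      have hc1 : f₁ (Quotient.out c) ≠ 0 := fun h0 => by
        simp [h0] at hc
      have := ht _ hc1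
      rwa [QuotientGroup.out_eq'] at this
    have hdc : (Function.support (dcConv P f₁ f₂)).Finite := by
      apply Set.Finite.subset (h₁.1.mul h₂.1)
      intro w hw
      rw [Function.mem_support, hdcval w] at hw
      obtain ⟨c, hc, hcne⟩ := Finset.exists_ne_zero_of_sum_ne_zero hw
      refine Set.mem_mul.2 ⟨Quotient.out c, ?_, (Quotient.out c)⁻¹ * w, ?_, by group⟩
      · exact fun h0 => hcne (by rw [h0, zero_mul])
      · exact fun h0 => hcne (by rw [h0, mul_zero])
    ext x
    rw [iotaDC_apply P hdc, hdcval x, MonoidAlgebra.coeff_mul_apply_left]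
    have hss : (iotaDC P f₁).coeff.support ⊆ h₁.1.toFinset := by
      intro a ha
      rw [Finsupp.mem_support_iff, iotaDC_apply P h₁.1] at ha
      rw [Set.Finite.mem_toFinset, Function.mem_support]
      exact fun h0 => ha (by rw [h0, zero_div])
    rw [Finsupp.sum_of_support_subset _ hss (fun a b => b * (iotaDC P f₂).coeff (a⁻¹ * x)) (fun a _ => zero_mul _)]
    have hterm : ∀ a ∈ h₁.1.toFinset,
        (iotaDC P f₁).coeff a * (iotaDC P f₂).coeff (a⁻¹ * x)
          = f₁ a * f₂ (a⁻¹ * x) / ((Nat.card P : ℚ) * (Nat.card P : ℚ)) := by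
      intro a _
      rw [iotaDC_apply P h₁.1, iotaDC_apply P h₂.1, div_mul_div_comm]
    rw [Finset.sum_congr rfl hterm, ← Finset.sum_div, coset_sum h₁ h₂ x T ht]
    field_simp
  · -- injectivity
    intro f g hf hg h
    funext x
    have hx : (iotaDC P f).coeff x = (iotaDC P g).coeff x := by rw [h]
    rw [iotaDC_apply P hf.1, iotaDC_apply P hg.1] at hx
    rwa [div_left_inj' hN] at hx
end

section
/- Let X be a torsion-free abelian group and W a finite group acting faithfully on X by automorphisms, and let W̃ := X ⋊ W. Then the center of the group algebra ℚ[W̃] is exactly ℚ[X]^W, i.e., an element of ℚ[W̃] is central if and only if it is supported on the subgroup X ⊆ W̃ and its coefficient function on X is W-invariant. -/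
/-- Let `X` be a torsion-free abelian group and `W` a finite group acting faithfully on `X`
by automorphisms (the action given by `φ : W →* MulAut (Multiplicative X)`), and let
`W̃ := X ⋊ W`.  Then the center of the group algebra `ℚ[W̃]` is exactly `ℚ[X]^W`: an element
of `ℚ[W̃]` is central if and only if it is supported on the subgroup `X ⊆ W̃` and its
coefficient function on `X` is `W`-invariant. -/
theorem center_of_extended_affine_group_algebra
    {X : Type*} [AddCommGroup X] {W : Type*} [Group W] [Finite W]
    (φ : W →* MulAut (Multiplicative X))
    (htorsionfree : ∀ (x : X) (n : ℕ), n ≠ 0 → n • x = 0 → x = 0)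
    (hfaithful : ∀ w : W, (∀ x : Multiplicative X, φ w x = x) → w = 1)
    (z : MonoidAlgebra ℚ (Multiplicative X ⋊[φ] W)) :
    (∀ y : MonoidAlgebra ℚ (Multiplicative X ⋊[φ] W), z * y = y * z) ↔
      ((∀ wt : Multiplicative X ⋊[φ] W, z.coeff wt ≠ 0 → wt.right = 1) ∧
       (∀ (w : W) (x : Multiplicative X),
         z.coeff (SemidirectProduct.inl (φ w x)) = z.coeff (SemidirectProduct.inl x))) := by
  -- torsion-freeness for Multiplicative X
  have htf : ∀ (u : Multiplicative X) (n : ℕ), n ≠ 0 → u ^ n = 1 → u = 1 := by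
    intro u n hn h
    have := htorsionfree u.toAdd n hn (by
      have : (u ^ n).toAdd = n • u.toAdd := by simp
      rw [h] at this; simpa using this.symm)
    simpa using this
  constructor
  · intro hz
    -- conjugation invariance
    have hconj : ∀ g h : Multiplicative X ⋊[φ] W, z.coeff (g * h * g⁻¹) = z.coeff h := by
      intro g h
      have := congrArg (fun f => f.coeff (g * h)) (hz (MonoidAlgebra.single g 1))
      simpa [MonoidAlgebra.coeff_mul_single_apply, MonoidAlgebra.coeff_single_mul_apply,
        mul_assoc] using this
    constructor
    · intro wt hwt
      by_contra hw
      obtain ⟨x, hx⟩ : ∃ x : Multiplicative X, φ wt.right x ≠ x := by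
        by_contra h
        push_neg at h
        exact hw (hfaithful wt.right h)
      -- the conjugates of wt by inl (x^n) are pairwise distinct and in the support
      set f : ℕ → Multiplicative X ⋊[φ] W := fun n => SemidirectProduct.inl (x ^ n) * wt *
        (SemidirectProduct.inl (x ^ n))⁻¹ with hf
      have hmem : ∀ n, f n ∈ z.coeff.support := by
        intro n
        simp only [Finsupp.mem_support_iff, hf, hconj]
        exact hwt
      have hgen : ∀ t : Multiplicative X,
          (SemidirectProduct.inl t * wt * (SemidirectProduct.inl t)⁻¹).left
            = t * wt.left * (φ wt.right t)⁻¹ := by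
        intro t
        simp [SemidirectProduct.mul_left, SemidirectProduct.inv_left,
          SemidirectProduct.mul_right, mul_assoc]
      have hleft : ∀ n, (f n).left = x ^ n * wt.left * (φ wt.right x)⁻¹ ^ n := by
        intro n
        simp only [hf]
        rw [hgen, map_pow, inv_pow]
      have hinj : Function.Injective f := by
        intro n m hnm
        have h1 : x ^ n * wt.left * (φ wt.right x)⁻¹ ^ n
            = x ^ m * wt.left * (φ wt.right x)⁻¹ ^ m := by
          rw [← hleft, ← hleft, hnm]
        set u : Multiplicative X := x * (φ wt.right x)⁻¹ with hu
        have hu1 : u ≠ 1 := by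
          simp only [hu, Ne, mul_inv_eq_one]
          exact fun h => hx h.symm
        have e : ∀ k : ℕ, x ^ k * wt.left * (φ wt.right x)⁻¹ ^ k = u ^ k * wt.left := by
          intro k
          rw [hu, mul_pow, mul_right_comm]
        rw [e, e] at h1
        have h2 : u ^ n = u ^ m := mul_right_cancel h1
        rcases le_total n m with hle | hle
        · by_contra hne
          have h3 : u ^ (m - n) * u ^ n = 1 * u ^ n := by
            rw [one_mul, ← pow_add, Nat.sub_add_cancel hle, h2]
          exact hu1 (htf u (m - n) (by omega) (mul_right_cancel h3))
        · by_contra hne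
          have h3 : u ^ (n - m) * u ^ m = 1 * u ^ m := by
            rw [one_mul, ← pow_add, Nat.sub_add_cancel hle, ← h2]
          exact hu1 (htf u (n - m) (by omega) (mul_right_cancel h3))
      exact (Set.not_infinite.mpr z.coeff.support.finite_toSet)
        ((Set.infinite_range_of_injective hinj).mono (Set.range_subset_iff.mpr hmem))
    · intro w x
      have := hconj (SemidirectProduct.inr w) (SemidirectProduct.inl x)
      rwa [← map_inv, ← SemidirectProduct.inl_aut] at this
  · rintro ⟨h1, h2⟩
    -- conjugation invariance from the two conditions
    have hconj : ∀ g h : Multiplicative X ⋊[φ] W, z.coeff (g * h * g⁻¹) = z.coeff h := by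
      intro g h
      by_cases hh : h.right = 1
      · -- h = inl h.left
        have hh' : h = SemidirectProduct.inl h.left := by
          rw [← SemidirectProduct.inl_left_mul_inr_right h, hh]
          simp
        rw [hh']
        have key : g * SemidirectProduct.inl h.left * g⁻¹
            = SemidirectProduct.inl (φ g.right h.left) := by
          ext
          · simp [SemidirectProduct.mul_left, SemidirectProduct.inv_left, mul_assoc,
              mul_comm]
          · simp [SemidirectProduct.mul_right, SemidirectProduct.inv_right]
        rw [key, h2]
      · -- both sides are zero
        have hr : (g * h * g⁻¹).right ≠ 1 := by
          simp only [SemidirectProduct.mul_right, SemidirectProduct.inv_right]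
          intro hc
          apply hh
          have := congrArg (fun t => g.right⁻¹ * t * g.right) hc
          simpa [mul_assoc] using this
        have z1 : z.coeff (g * h * g⁻¹) = 0 := by
          by_contra hc; exact hr (h1 _ hc)
        have z2 : z.coeff h = 0 := by
          by_contra hc; exact hh (h1 _ hc)
        rw [z1, z2]
    -- commuting with singles
    have hsingle : ∀ (a : Multiplicative X ⋊[φ] W) (b : ℚ),
        z * MonoidAlgebra.single a b = MonoidAlgebra.single a b * z := by
      intro a b
      ext y
      rw [MonoidAlgebra.coeff_mul_single_apply, MonoidAlgebra.coeff_single_mul_apply]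
      have := hconj a⁻¹ (y * a⁻¹)
      rw [inv_inv] at this
      have e : a⁻¹ * (y * a⁻¹) * a = a⁻¹ * y := by group
      rw [e] at this
      rw [this, mul_comm]
    intro y
    induction y using MonoidAlgebra.induction with
    | zero => simp
    | single_add a b f _ _ ih =>
      rw [mul_add, add_mul, ih, hsingle]
end
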